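/- Let n ≥ 2. The graded ring R = ℤ[ξ,ξ']/(ξ^{n+1}, (ξ')^{n+1}, ∑_{i=0}^n (−1)^i ξ^i (ξ')^{n−i}) is a free ℤ-module with basis the monomials ξ^a (ξ')^b with 0 ≤ a ≤ n and 0 ≤ b ≤ n−1. -/

import Mathlib

open MvPolynomial Finset

set_option maxRecDepth 8000

namespace Stmt16Aux

variable (n : ℕ)

/-- The ideal. -/
noncomputable def I : Ideal (MvPolynomial (Fin 2) ℤ) :=
  Ideal.span {(X 0 : MvPolynomial (Fin 2) ℤ) ^ (n + 1), (X 1) ^ (n + 1),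
    ∑ i ∈ range (n + 1), (-1 : MvPolynomial (Fin 2) ℤ) ^ i * X 0 ^ i * X 1 ^ (n - i)}

/-- A = ℤ[x]/(x^{n+1}) -/
noncomputable abbrev A : Type := AdjoinRoot ((Polynomial.X : Polynomial ℤ) ^ (n + 1))

noncomputable abbrev r : A n := AdjoinRoot.root _

/-- the relation as a monic polynomial over A -/
noncomputable def q : Polynomial (A n) :=
  ∑ i ∈ range (n + 1), Polynomial.C ((-1 : A n) ^ i * r n ^ i) * Polynomial.X ^ (n - i)

lemma q_eq : q n = Polynomial.X ^ n + ∑ i ∈ range n,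
    Polynomial.C ((-1 : A n) ^ (i + 1) * r n ^ (i + 1)) * Polynomial.X ^ (n - (i + 1)) := by
  rw [q, Finset.sum_range_succ']
  simp
  exact add_comm _ _

lemma deg_lt (hn : 1 ≤ n) : (∑ i ∈ range n,
    Polynomial.C ((-1 : A n) ^ (i + 1) * r n ^ (i + 1)) * Polynomial.X ^ (n - (i + 1))).degree
    < (n : WithBot ℕ) := by
  apply lt_of_le_of_lt (Polynomial.degree_sum_le _ _)
  rw [Finset.sup_lt_iff (by exact WithBot.bot_lt_coe n)]
  intro i hi
  have hi' := Finset.mem_range.mp hi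
  apply lt_of_le_of_lt (Polynomial.degree_C_mul_X_pow_le _ _)
  exact_mod_cast Nat.sub_lt (by omega) (by omega)

lemma q_monic (hn : 1 ≤ n) : (q n).Monic := by
  rw [q_eq]
  exact Polynomial.monic_X_pow_add (deg_lt n hn)

lemma rpow : r n ^ (n + 1) = 0 := by
  have h : (r n) = AdjoinRoot.mk _ Polynomial.X := (AdjoinRoot.mk_X).symm
  rw [h, ← map_pow, AdjoinRoot.mk_self]

lemma nontrivA : (1 : A n) ≠ 0 := by
  intro h
  have h2 : (AdjoinRoot.mk _ (1 : Polynomial ℤ) : A n) = AdjoinRoot.mk _ 0 := by simpa using h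
  rw [AdjoinRoot.mk_eq_mk, sub_zero] at h2
  obtain ⟨c, hc⟩ := h2
  have := congrArg (Polynomial.eval 0) hc
  simp at this

instance : Nontrivial (A n) := ⟨⟨1, 0, nontrivA n⟩⟩

lemma q_degree (hn : 1 ≤ n) : (q n).degree = n := by
  rw [q_eq, Polynomial.degree_add_eq_left_of_degree_lt
    (by rw [Polynomial.degree_X_pow]; exact deg_lt n hn), Polynomial.degree_X_pow]

lemma q_natDegree (hn : 1 ≤ n) : (q n).natDegree = n :=
  Polynomial.natDegree_eq_of_degree_eq_some (q_degree n hn)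


noncomputable abbrev B : Type := AdjoinRoot (q n)

noncomputable abbrev s : B n := AdjoinRoot.root _

noncomputable abbrev r' : B n := AdjoinRoot.of (q n) (r n)

/-- forward map on the polynomial ring -/
noncomputable def phi0 : MvPolynomial (Fin 2) ℤ →+* B n :=
  MvPolynomial.eval₂Hom (Int.castRingHom (B n)) ![r' n, s n]

lemma phi0_X0 : phi0 n (X 0) = r' n := by simp [phi0]

lemma phi0_X1 : phi0 n (X 1) = s n := by simp [phi0]

lemma r'pow : r' n ^ (n + 1) = 0 := by
  rw [← map_pow, rpow, map_zero]

lemma phi0_S : phi0 n (∑ i ∈ range (n + 1),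
    (-1 : MvPolynomial (Fin 2) ℤ) ^ i * X 0 ^ i * X 1 ^ (n - i)) = 0 := by
  have h0 : Polynomial.aeval (s n) (q n) = 0 := by
    rw [AdjoinRoot.aeval_eq, AdjoinRoot.mk_self]
  have hq : q n = ∑ i ∈ range (n + 1),
      Polynomial.C ((-1 : A n) ^ i * r n ^ i) * Polynomial.X ^ (n - i) := rfl
  have h := (congrArg (Polynomial.aeval (s n)) hq).symm.trans h0
  rw [map_sum] at h
  simp only [map_mul, map_pow, Polynomial.aeval_C, Polynomial.aeval_X, map_neg, map_one,
    AdjoinRoot.algebraMap_eq] at h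
  rw [map_sum]
  simp only [map_mul, map_pow, map_neg, map_one, phi0_X0, phi0_X1]
  rw [← h]

lemma spow : s n ^ (n + 1) = 0 := by
  have key := geom_sum₂_mul (-(r' n)) (s n) (n + 1)
  have h1 : (∑ i ∈ range (n + 1), (-(r' n)) ^ i * s n ^ (n + 1 - 1 - i)) = 0 := by
    rw [← phi0_S n, map_sum]
    refine Finset.sum_congr rfl fun i hi => ?_
    rw [map_mul, map_mul, map_pow, map_pow, map_pow, map_neg, map_one, phi0_X0, phi0_X1]
    rw [Nat.add_sub_cancel, neg_pow, mul_assoc]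
  rw [h1, zero_mul, neg_pow, r'pow, mul_zero, zero_sub] at key
  exact neg_eq_zero.mp key.symm

lemma ideal_le_ker : I n ≤ RingHom.ker (phi0 n) := by
  rw [I, Ideal.span_le]
  rintro x hx
  simp only [Set.mem_insert_iff, Set.mem_singleton_iff] at hx
  rcases hx with rfl | rfl | rfl
  · simp [RingHom.mem_ker, map_pow, phi0_X0, r'pow]
  · simp [RingHom.mem_ker, map_pow, phi0_X1, spow]
  · exact phi0_S n

/-- induced map on the quotient -/
noncomputable def phi : (MvPolynomial (Fin 2) ℤ ⧸ I n) →+* B n :=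
  Ideal.Quotient.lift (I n) (phi0 n) (fun a ha => ideal_le_ker n ha)

lemma mkX0_pow : (Ideal.Quotient.mk (I n) (X 0)) ^ (n + 1) = 0 := by
  rw [← map_pow, Ideal.Quotient.eq_zero_iff_mem]
  exact Ideal.subset_span (Set.mem_insert _ _)

noncomputable def psiA : A n →+* (MvPolynomial (Fin 2) ℤ ⧸ I n) :=
  AdjoinRoot.lift (Int.castRingHom _) (Ideal.Quotient.mk (I n) (X 0))
    (by rw [Polynomial.eval₂_X_pow]; exact mkX0_pow n)

lemma psiA_r : psiA n (r n) = Ideal.Quotient.mk (I n) (X 0) := AdjoinRoot.lift_root _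

lemma psi_aux : (q n).eval₂ (psiA n) (Ideal.Quotient.mk (I n) (X 1)) = 0 := by
  have hS : Ideal.Quotient.mk (I n) (∑ i ∈ range (n + 1),
      (-1 : MvPolynomial (Fin 2) ℤ) ^ i * X 0 ^ i * X 1 ^ (n - i)) = 0 :=
    Ideal.Quotient.eq_zero_iff_mem.mpr (Ideal.subset_span (by simp))
  rw [map_sum] at hS
  simp only [map_mul, map_pow, map_neg, map_one] at hS
  rw [q, Polynomial.eval₂_finset_sum]
  simp only [Polynomial.eval₂_mul, Polynomial.eval₂_pow, Polynomial.eval₂_neg,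
    Polynomial.eval₂_one, Polynomial.eval₂_C, Polynomial.eval₂_X, Polynomial.eval₂_X_pow, map_mul, map_pow,
    map_neg, map_one, psiA_r]
  rw [← hS]

noncomputable def psi : B n →+* (MvPolynomial (Fin 2) ℤ ⧸ I n) :=
  AdjoinRoot.lift (psiA n) (Ideal.Quotient.mk (I n) (X 1)) (psi_aux n)


lemma psi_comp_phi : (psi n).comp ((phi n).comp (Ideal.Quotient.mk (I n))) =
    Ideal.Quotient.mk (I n) := by
  apply MvPolynomial.ringHom_ext
  · intro z
    exact (RingHom.congr_fun (RingHom.ext_int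
      (((psi n).comp ((phi n).comp (Ideal.Quotient.mk (I n)))).comp (C : ℤ →+* _))
      ((Ideal.Quotient.mk (I n)).comp (C : ℤ →+* _))) z)
  · intro i
    fin_cases i
    · show psi n (phi n (Ideal.Quotient.mk (I n) (X 0))) = _
      rw [show phi n (Ideal.Quotient.mk (I n) (X 0)) = phi0 n (X 0) from rfl, phi0_X0]
      show psi n (AdjoinRoot.of (q n) (r n)) = _
      rw [show psi n (AdjoinRoot.of (q n) (r n)) = psiA n (r n) from AdjoinRoot.lift_of _]
      exact psiA_r n
    · show psi n (phi n (Ideal.Quotient.mk (I n) (X 1))) = _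
      rw [show phi n (Ideal.Quotient.mk (I n) (X 1)) = phi0 n (X 1) from rfl, phi0_X1]
      exact AdjoinRoot.lift_root _

lemma psi_comp_phi' : (psi n).comp (phi n) = RingHom.id _ := by
  refine Ideal.Quotient.ringHom_ext ?_
  rw [RingHom.comp_assoc, psi_comp_phi]
  rfl

lemma phi_comp_psiA : (phi n).comp (psiA n) = AdjoinRoot.of (q n) := by
  refine RingHom.ext fun a => ?_
  induction a using AdjoinRoot.induction_on with
  | ih p =>
    rw [RingHom.comp_apply]
    rw [show psiA n (AdjoinRoot.mk _ p) = p.eval₂ (Int.castRingHom _)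
      (Ideal.Quotient.mk (I n) (X 0)) from AdjoinRoot.lift_mk _ _]
    rw [Polynomial.hom_eval₂]
    have h1 : (phi n).comp (Int.castRingHom (MvPolynomial (Fin 2) ℤ ⧸ I n)) =
        Int.castRingHom (B n) := RingHom.ext_int _ _
    have h2 : phi n (Ideal.Quotient.mk (I n) (X 0)) = r' n := phi0_X0 n
    rw [h1, h2]
    have h3 : AdjoinRoot.mk ((Polynomial.X : Polynomial ℤ) ^ (n + 1)) p =
        p.eval₂ (Int.castRingHom (A n)) (r n) := by
      rw [← AdjoinRoot.aeval_eq, Polynomial.aeval_def]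
      exact congrArg (fun f => Polynomial.eval₂ f _ p) (RingHom.ext_int _ _)
    rw [h3, Polynomial.hom_eval₂, show (AdjoinRoot.of (q n)).comp (Int.castRingHom (A n)) =
      Int.castRingHom (B n) from RingHom.ext_int _ _]

lemma phi_comp_psi : (phi n).comp (psi n) = RingHom.id _ := by
  refine RingHom.ext fun b => ?_
  induction b using AdjoinRoot.induction_on with
  | ih p =>
    rw [RingHom.comp_apply, RingHom.id_apply]
    rw [show psi n (AdjoinRoot.mk _ p) = p.eval₂ (psiA n)
      (Ideal.Quotient.mk (I n) (X 1)) from AdjoinRoot.lift_mk _ _]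
    rw [Polynomial.hom_eval₂, phi_comp_psiA]
    rw [show phi n (Ideal.Quotient.mk (I n) (X 1)) = s n from phi0_X1 n]
    rw [← AdjoinRoot.algebraMap_eq, ← Polynomial.aeval_def, AdjoinRoot.aeval_eq]

/-- the ring isomorphism -/
noncomputable def e : (MvPolynomial (Fin 2) ℤ ⧸ I n) ≃+* B n :=
  RingEquiv.ofRingHom (phi n) (psi n) (phi_comp_psi n) (psi_comp_phi' n)


noncomputable def pbA : PowerBasis ℤ (A n) :=
  AdjoinRoot.powerBasis' (Polynomial.monic_X_pow (n + 1))

noncomputable def bA : Module.Basis (Fin (n + 1)) ℤ (A n) :=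
  (pbA n).basis.reindex (finCongr (by simp [pbA]))

noncomputable def pbB (hn : 1 ≤ n) : PowerBasis (A n) (B n) :=
  AdjoinRoot.powerBasis' (q_monic n hn)

noncomputable def bB (hn : 1 ≤ n) : Module.Basis (Fin n) (A n) (B n) :=
  (pbB n hn).basis.reindex (finCongr (by simp [pbB, q_natDegree n hn]))

noncomputable def bigB (hn : 1 ≤ n) : Module.Basis (Fin (n + 1) × Fin n) ℤ (B n) :=
  (bA n).smulTower (bB n hn)

noncomputable def bQ (hn : 1 ≤ n) :
    Module.Basis (Fin (n + 1) × Fin n) ℤ (MvPolynomial (Fin 2) ℤ ⧸ I n) :=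
  (bigB n hn).map ((e n).symm.toAddEquiv.toIntLinearEquiv)

lemma bQ_apply (hn : 1 ≤ n) (a : Fin (n + 1) × Fin n) :
    bQ n hn a = Ideal.Quotient.mk (I n) (X 0 ^ (a.1 : ℕ) * X 1 ^ (a.2 : ℕ)) := by
  have h1 : bigB n hn a = AdjoinRoot.of (q n) (r n ^ (a.1 : ℕ)) * s n ^ (a.2 : ℕ) := by
    rw [bigB, Module.Basis.smulTower_apply, bA, bB, Module.Basis.reindex_apply, Module.Basis.reindex_apply,
      PowerBasis.basis_eq_pow, PowerBasis.basis_eq_pow, Algebra.smul_def]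
    simp [pbA, pbB, AdjoinRoot.algebraMap_eq]
    rfl
  rw [bQ, Module.Basis.map_apply, h1]
  show psi n (AdjoinRoot.of (q n) (r n ^ (a.1 : ℕ)) * s n ^ (a.2 : ℕ)) = _
  rw [map_mul, map_pow, map_pow,
    show psi n (AdjoinRoot.of (q n) (r n)) = psiA n (r n) from AdjoinRoot.lift_of _, psiA_r,
    map_pow, show psi n (s n) = Ideal.Quotient.mk (I n) (X 1) from AdjoinRoot.lift_root _,
    ← map_pow, ← map_pow, ← map_mul]

end Stmt16Aux

open Stmt16Aux in
theorem stmt_16 (n : ℕ) (hn : 2 ≤ n) :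
    ∃ b : Module.Basis (Fin (n + 1) × Fin n) ℤ
      (MvPolynomial (Fin 2) ℤ ⧸
        Ideal.span {(X 0 : MvPolynomial (Fin 2) ℤ) ^ (n + 1), (X 1) ^ (n + 1),
          ∑ i ∈ range (n + 1), (-1 : MvPolynomial (Fin 2) ℤ) ^ i * X 0 ^ i * X 1 ^ (n - i)}),
      ∀ a : Fin (n + 1) × Fin n,
        b a = Ideal.Quotient.mk _ (X 0 ^ (a.1 : ℕ) * X 1 ^ (a.2 : ℕ)) :=
  ⟨bQ n (by omega), fun a => bQ_apply n (by omega) a⟩
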